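/- Every torsion-free one-relator group on at least two generators has infinite C-width. -/

import Mathlib

/-- A subset `S` of a group is conjugation invariant if it is closed under
conjugation by all elements of the group. -/
def ConjInvariant {G : Type*} [Group G] (S : Set G) : Prop :=
  ∀ g s : G, s ∈ S → g⁻¹ * s * g ∈ S

/-- A group has finite width with respect to `S` if there is `n` such that every
element is a product of at most `n` elements of `S ∪ S⁻¹`. -/
def HasFiniteWidth {G : Type*} [Group G] (S : Set G) : Prop :=
  ∃ n : ℕ, ∀ g : G, ∃ l : List G, (∀ x ∈ l, x ∈ S ∪ S⁻¹) ∧ l.prod = g ∧ l.length ≤ n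

/-- A group has finite `C`-width if it has finite width with respect to every
conjugation invariant generating set. -/
def FiniteCWidth (G : Type*) [Group G] : Prop :=
  ∀ S : Set G, Subgroup.closure S = ⊤ → ConjInvariant S → HasFiniteWidth S

section aux

variable {n : ℕ}

/-- exponent-sum of generator `i` in a free group word. -/
noncomputable def expSum (i : Fin n) : FreeGroup (Fin n) →* Multiplicative ℤ :=
  FreeGroup.lift (fun j => Multiplicative.ofAdd (if j = i then (1:ℤ) else 0))

lemma lift_eq_sum (c : Fin n → ℤ) (r : FreeGroup (Fin n)) :
    FreeGroup.lift (fun j => Multiplicative.ofAdd (c j)) r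
      = Multiplicative.ofAdd (∑ i, c i * Multiplicative.toAdd (expSum i r)) := by
  induction r with
  | C1 => simp only [map_one, toAdd_one, mul_zero, Finset.sum_const_zero, ofAdd_zero]
  | of x =>
      have h : ∀ i : Fin n, expSum i (FreeGroup.of x)
          = Multiplicative.ofAdd (if x = i then (1:ℤ) else 0) :=
        fun i => FreeGroup.lift_apply_of
      show FreeGroup.lift _ (FreeGroup.of x)
          = Multiplicative.ofAdd (∑ i, c i * Multiplicative.toAdd (expSum i (FreeGroup.of x)))
      rw [FreeGroup.lift_apply_of]
      simp only [h, toAdd_ofAdd]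
      rw [Finset.sum_congr rfl (fun i _ => by rw [mul_ite, mul_one, mul_zero])]
      rw [Finset.sum_ite_eq Finset.univ x c]
      simp
  | inv_of x ih =>
      rw [map_inv, ih]
      simp only [map_inv, toAdd_inv]
      rw [← ofAdd_neg, ← Finset.sum_neg_distrib]
      congr 1
      exact Finset.sum_congr rfl fun i _ => by ring
  | mul x y ihx ihy =>
      rw [map_mul, ihx, ihy, ← ofAdd_add]
      congr 1
      simp only [map_mul, toAdd_mul, mul_add]
      rw [← Finset.sum_add_distrib]

end aux

/-- Every torsion-free one-relator group on at least two generators has infinite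
`C`-width. -/
theorem one_relator_torsion_free_infinite_C_width (n : ℕ) (hn : 2 ≤ n)
    (r : FreeGroup (Fin n))
    (htf : ∀ g : PresentedGroup ({r} : Set (FreeGroup (Fin n))), g ≠ 1 → ¬IsOfFinOrder g) :
    ¬ FiniteCWidth (PresentedGroup ({r} : Set (FreeGroup (Fin n)))) := by
  have h0 : (0 : ℕ) < n := by omega
  have h1 : (1 : ℕ) < n := by omega
  set i0 : Fin n := ⟨0, h0⟩ with hi0def
  set i1 : Fin n := ⟨1, h1⟩ with hi1def
  set a : ℤ := Multiplicative.toAdd (expSum i0 r) with hadef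
  set b : ℤ := Multiplicative.toAdd (expSum i1 r) with hbdef
  have hi01 : i0 ≠ i1 := by simp [hi0def, hi1def, Fin.ext_iff]
  obtain ⟨c, hker, u, v, hbez⟩ :
      ∃ c : Fin n → ℤ, (∑ i, c i * Multiplicative.toAdd (expSum i r)) = 0 ∧
        ∃ u v : ℤ, c i0 * u + c i1 * v = 1 := by
    by_cases hab : a = 0 ∧ b = 0
    · refine ⟨fun i => if i = i0 then 1 else 0, ?_, 1, 0, by simp⟩
      rw [Finset.sum_eq_single i0]
      · simp [← hadef, hab.1]
      · intro j _ hj; simp [hj]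
      · simp
    · have hg : 0 < Int.gcd a b := Int.gcd_pos_iff.mpr (by tauto)
      set g : ℤ := (Int.gcd a b : ℤ) with hgdef
      have hgne : g ≠ 0 := by positivity
      obtain ⟨a', ha'⟩ : g ∣ a := Int.gcd_dvd_left a b
      obtain ⟨b', hb'⟩ : g ∣ b := Int.gcd_dvd_right a b
      have hag : a / g = a' := by rw [ha', Int.mul_ediv_cancel_left _ hgne]
      have hbg : b / g = b' := by rw [hb', Int.mul_ediv_cancel_left _ hgne]
      set c : Fin n → ℤ := fun i => if i = i0 then b' else if i = i1 then -a' else 0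
        with hcdef
      have hc0 : c i0 = b' := by simp [hcdef]
      have hc1 : c i1 = -a' := by simp [hcdef, hi01.symm]
      refine ⟨c, ?_, ?_⟩
      · have hsub : ∑ i, c i * Multiplicative.toAdd (expSum i r)
            = ∑ i ∈ ({i0, i1} : Finset (Fin n)),
                c i * Multiplicative.toAdd (expSum i r) := by
          refine (Finset.sum_subset (Finset.subset_univ _) ?_).symm
          intro j _ hj
          simp only [Finset.mem_insert, Finset.mem_singleton, not_or] at hj
          simp [hcdef, hj.1, hj.2]
        rw [hsub, Finset.sum_pair hi01, hc0, hc1, ← hadef, ← hbdef, ha', hb']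
        ring
      · have hcop : Int.gcd b' a' = 1 := by
          have := Int.gcd_div_gcd_div_gcd (i := b) (j := a)
            (by rwa [Int.gcd_comm])
          rw [Int.gcd_comm b a, ← hgdef, hbg, hag] at this
          exact this
        refine ⟨Int.gcdA b' a', -Int.gcdB b' a', ?_⟩
        have := Int.gcd_eq_gcd_ab b' a'
        rw [hcop] at this
        rw [hc0, hc1]
        push_cast at this
        linear_combination -this
  -- the homomorphism to Multiplicative ℤ
  set f : Fin n → Multiplicative ℤ := fun i => Multiplicative.ofAdd (c i) with hfdef
  have hrel : ∀ s ∈ ({r} : Set (FreeGroup (Fin n))), FreeGroup.lift f s = 1 := by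
    intro s hs
    rw [Set.mem_singleton_iff] at hs
    rw [hs, hfdef, lift_eq_sum c r, hker]
    rfl
  set φ : PresentedGroup ({r} : Set (FreeGroup (Fin n))) →* Multiplicative ℤ :=
    PresentedGroup.toGroup hrel with hφdef
  have hφof : ∀ i : Fin n, φ (PresentedGroup.of i) = Multiplicative.ofAdd (c i) :=
    fun i => PresentedGroup.toGroup.of hrel
  -- an element mapping to ofAdd 1
  have hzpow : ∀ (x : PresentedGroup ({r} : Set (FreeGroup (Fin n)))) (m : ℤ),
      φ (x ^ m) = Multiplicative.ofAdd (m * Multiplicative.toAdd (φ x)) := by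
    intro x m
    rw [map_zpow, ← ofAdd_toAdd ((φ x) ^ m), toAdd_zpow]
    congr 1
    all_goals ring
  obtain ⟨s, hs⟩ : ∃ s, φ s = Multiplicative.ofAdd (1 : ℤ) := by
    refine ⟨PresentedGroup.of i0 ^ u * PresentedGroup.of i1 ^ v, ?_⟩
    rw [map_mul, hzpow, hzpow, hφof, hφof, ← ofAdd_add]
    simp only [toAdd_ofAdd]
    rw [show u * c i0 + v * c i1 = 1 by linarith [hbez]]
  intro hfcw
  set S : Set (PresentedGroup ({r} : Set (FreeGroup (Fin n)))) :=
    {x | φ x = Multiplicative.ofAdd (1 : ℤ)} with hSdef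
  have hsS : s ∈ S := hs
  -- S generates
  have hgen : Subgroup.closure S = ⊤ := by
    rw [eq_top_iff]
    intro g _
    have hker' : ∀ k, φ k = 1 → k ∈ Subgroup.closure S := by
      intro k hk
      have hks : k * s ∈ S := by
        simp only [hSdef, Set.mem_setOf_eq, map_mul, hk, hs, one_mul]
      have : k = (k * s) * s⁻¹ := by group
      rw [this]
      exact mul_mem (Subgroup.subset_closure hks)
        (inv_mem (Subgroup.subset_closure hsS))
    set m : ℤ := Multiplicative.toAdd (φ g) with hmdef
    have hgk : φ (g * s ^ (-m)) = 1 := by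
      rw [map_mul, hzpow, hs, toAdd_ofAdd, mul_one, ← ofAdd_toAdd (φ g), ← hmdef,
        ← ofAdd_add, add_neg_cancel, ofAdd_zero]
    have : g = (g * s ^ (-m)) * s ^ m := by group
    rw [this]
    exact mul_mem (hker' _ hgk)
      (zpow_mem (Subgroup.subset_closure hsS) m)
  -- S is conjugation invariant
  have hconj : ConjInvariant S := by
    intro g x hx
    simp only [hSdef, Set.mem_setOf_eq, map_mul, map_inv] at hx ⊢
    rw [hx, mul_comm ((φ g)⁻¹) (Multiplicative.ofAdd 1), mul_assoc,
      inv_mul_cancel, mul_one]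
  obtain ⟨N, hN⟩ := hfcw S hgen hconj
  -- bound: any product of ≤ N elements of S ∪ S⁻¹ maps into [-N, N]
  have hbound : ∀ l : List (PresentedGroup ({r} : Set (FreeGroup (Fin n)))),
      (∀ x ∈ l, x ∈ S ∪ S⁻¹) → Multiplicative.toAdd (φ l.prod) ≤ (l.length : ℤ) := by
    intro l
    induction l with
    | nil => intro _; simp
    | cons x t ih =>
        intro hmem
        have hx : x ∈ S ∪ S⁻¹ := hmem x List.mem_cons_self
        have hxval : Multiplicative.toAdd (φ x) ≤ 1 := by
          rcases hx with hx | hx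
          · rw [hSdef] at hx; rw [hx]; simp
          · have : x⁻¹ ∈ S := hx
            rw [hSdef, Set.mem_setOf_eq, map_inv] at this
            have : φ x = Multiplicative.ofAdd (-1 : ℤ) := by
              rw [← inv_inv (φ x), this]; rfl
            rw [this]; simp
        have ht := ih (fun y hy => hmem y (List.mem_cons_of_mem x hy))
        rw [List.prod_cons, map_mul, toAdd_mul]
        simp only [List.length_cons]
        push_cast
        linarith
  obtain ⟨l, hlmem, hlprod, hllen⟩ := hN (s ^ (N + 1 : ℕ))
  have h1 : Multiplicative.toAdd (φ (s ^ (N + 1 : ℕ))) = (N : ℤ) + 1 := by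
    rw [map_pow, hs, ← ofAdd_nsmul, toAdd_ofAdd]
    push_cast
    ring
  have h2 := hbound l hlmem
  rw [hlprod, h1] at h2
  have : (l.length : ℤ) ≤ (N : ℤ) := by exact_mod_cast hllen
  linarith
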